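/- Let X be a finite nonempty alphabet, let p be a probability distribution on X, and let x, y ∈ X with p(x) < p(y). Let ε > 0 satisfy p(x) + ε < p(y) − ε, and define q by q(x) = p(x) + ε, q(y) = p(y) − ε, and q(z) = p(z) for all other z. Then q is a probability distribution on X and H*(q) > H*(p). -/

import Mathlib

/-- Lin entropy of a distribution on a finite alphabet. -/
noncomputable def linEntropy {X : Type*} [Fintype X] (p : X → ℝ) : ℝ :=
  ∑ x, p x * ((1 / 2) * Real.logb 2 (4 * p x ^ p x / (p x + 1) ^ (p x + 1)))

open Real Set

noncomputable def linG (t : ℝ) : ℝ :=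
  t + (t * (t * Real.log t) - t * ((t + 1) * Real.log (t + 1))) / (2 * Real.log 2)

lemma linG_eq (t : ℝ) (ht : 0 ≤ t) :
    t * ((1 / 2) * Real.logb 2 (4 * t ^ t / (t + 1) ^ (t + 1))) = linG t := by
  rcases eq_or_lt_of_le ht with h | h
  · simp [linG, ← h]
  · have h1 : (0:ℝ) < t + 1 := by linarith
    have hrp : (0:ℝ) < t ^ t := Real.rpow_pos_of_pos h t
    have hrp1 : (0:ℝ) < (t + 1) ^ (t + 1) := Real.rpow_pos_of_pos h1 _
    have hlog2 : Real.log 2 ≠ 0 := ne_of_gt (Real.log_pos (by norm_num))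
    rw [Real.logb, Real.log_div (by positivity) hrp1.ne',
      Real.log_mul (by norm_num) hrp.ne', Real.log_rpow h, Real.log_rpow h1,
      show (4:ℝ) = 2 ^ (2:ℕ) by norm_num, Real.log_pow]
    unfold linG
    field_simp
    ring

noncomputable def linG' (t : ℝ) : ℝ :=
  1 + (2 * t * Real.log t - (2 * t + 1) * Real.log (t + 1)) / (2 * Real.log 2)

lemma hasDerivAt_linG {t : ℝ} (ht : 0 < t) : HasDerivAt linG (linG' t) t := by
  have h1 : (0:ℝ) < t + 1 := by linarith
  have hA : HasDerivAt (fun s : ℝ => s * (s * Real.log s))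
      (1 * (t * Real.log t) + t * (Real.log t + 1)) t :=
    (hasDerivAt_id t).mul (Real.hasDerivAt_mul_log ht.ne')
  have hlog1 : HasDerivAt (fun s : ℝ => (s + 1) * Real.log (s + 1))
      ((Real.log (t + 1) + 1) * 1) t :=
    by have := (Real.hasDerivAt_mul_log h1.ne').comp t ((hasDerivAt_id' t).add_const 1); exact this
  have hB : HasDerivAt (fun s : ℝ => s * ((s + 1) * Real.log (s + 1)))
      (1 * ((t + 1) * Real.log (t + 1)) + t * ((Real.log (t + 1) + 1) * 1)) t :=
    (hasDerivAt_id t).mul hlog1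
  have := ((hasDerivAt_id t).add (((hA.sub hB).div_const (2 * Real.log 2))))
  refine this.congr_deriv ?_
  unfold linG'
  have hlog2 : Real.log 2 ≠ 0 := ne_of_gt (Real.log_pos (by norm_num))
  field_simp
  ring

lemma hasDerivAt_linG' {t : ℝ} (ht : 0 < t) :
    HasDerivAt linG'
      ((2 * Real.log t + 2 - (2 * Real.log (t + 1) + (2 * t + 1) / (t + 1))) /
        (2 * Real.log 2)) t := by
  have h1 : (0:ℝ) < t + 1 := by linarith
  have hA : HasDerivAt (fun s : ℝ => 2 * s * Real.log s) (2 * (Real.log t + 1)) t := by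
    have := (Real.hasDerivAt_mul_log ht.ne').const_mul 2
    rw [show (fun s : ℝ => 2 * s * Real.log s) = fun y => 2 * (y * Real.log y) by funext s; ring]
    exact this
  have hl : HasDerivAt (fun s : ℝ => Real.log (s + 1)) ((t + 1)⁻¹ * 1) t :=
    by have := (Real.hasDerivAt_log h1.ne').comp t ((hasDerivAt_id' t).add_const 1); exact this
  have hB : HasDerivAt (fun s : ℝ => (2 * s + 1) * Real.log (s + 1))
      (2 * Real.log (t + 1) + (2 * t + 1) * ((t + 1)⁻¹ * 1)) t := by
    have := (((hasDerivAt_id t).const_mul 2).add_const 1).mul hl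
    refine this.congr_deriv ?_
    simp only [id_eq]
    ring
  have := (hA.sub hB).div_const (2 * Real.log 2)
  have h0 : HasDerivAt (fun s : ℝ =>
      1 + (2 * s * Real.log s - (2 * s + 1) * Real.log (s + 1)) / (2 * Real.log 2))
      ((2 * (Real.log t + 1) - (2 * Real.log (t + 1) + (2 * t + 1) * ((t + 1)⁻¹ * 1))) /
        (2 * Real.log 2)) t := this.const_add 1
  refine h0.congr_deriv ?_
  simp only [div_eq_mul_inv, mul_one]
  ring

lemma strictConcaveOn_linG : StrictConcaveOn ℝ (Ici (0:ℝ)) linG := by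
  have hcont : ContinuousOn linG (Ici 0) := by
    apply Continuous.continuousOn
    unfold linG
    have h1 : Continuous fun t : ℝ => t * (t * Real.log t) :=
      continuous_id.mul Real.continuous_mul_log
    have h2 : Continuous fun t : ℝ => t * ((t + 1) * Real.log (t + 1)) :=
      continuous_id.mul (Real.continuous_mul_log.comp (continuous_id.add continuous_const))
    exact continuous_id.add ((h1.sub h2).div_const _)
  apply strictConcaveOn_of_deriv2_neg (convex_Ici 0) hcont
  intro t ht
  rw [interior_Ici] at ht
  have ht : (0:ℝ) < t := ht
  have h1 : (0:ℝ) < t + 1 := by linarith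
  have hderiv : ∀ s ∈ Ioi (0:ℝ), deriv linG s = linG' s := fun s hs =>
    (hasDerivAt_linG hs).deriv
  have heq : deriv linG =ᶠ[nhds t] linG' :=
    Filter.eventuallyEq_of_mem (isOpen_Ioi.mem_nhds ht) hderiv
  have h2 : deriv^[2] linG t = deriv linG' t := by
    simp only [Function.iterate_succ, Function.iterate_zero, Function.comp_apply, id_eq]
    exact heq.deriv_eq
  rw [h2, (hasDerivAt_linG' ht).deriv]
  have hlog2 : (0:ℝ) < 2 * Real.log 2 := by
    have := Real.log_pos (by norm_num : (1:ℝ) < 2); linarith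
  apply div_neg_of_neg_of_pos _ hlog2
  have hk : Real.log (t / (t + 1)) < t / (t + 1) - 1 :=
    Real.log_lt_sub_one_of_pos (by positivity)
      (by intro h; rw [div_eq_one_iff_eq h1.ne'] at h; linarith)
  rw [Real.log_div ht.ne' h1.ne'] at hk
  have e1 : t / (t + 1) - 1 = -(1 / (t + 1)) := by field_simp; ring
  have e2 : (2 * t + 1) / (t + 1) = 2 - 1 / (t + 1) := by field_simp; ring
  rw [e1] at hk
  rw [e2]
  have hpos : 0 < 1 / (t + 1) := by positivity
  linarith

/-- Transferring mass `ε` from a more likely symbol `y` to a less likely symbol `x`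
(with `p(x) + ε < p(y) − ε`) yields a probability distribution with strictly larger
Lin entropy. -/
theorem linEntropy_lt_of_transfer
    {X : Type*} [Fintype X] [DecidableEq X] [Nonempty X] (p : X → ℝ)
    (hp : ∀ z, 0 ≤ p z) (hsum : ∑ z, p z = 1)
    (x y : X) (hxy : p x < p y) (ε : ℝ) (hε : 0 < ε)
    (hlt : p x + ε < p y - ε)
    (q : X → ℝ)
    (hq : q = fun z => if z = x then p z + ε else if z = y then p z - ε else p z) :
    (∀ z, 0 ≤ q z) ∧ ∑ z, q z = 1 ∧ linEntropy q > linEntropy p := by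
  have hne : x ≠ y := fun h => absurd hxy (by simp [h])
  have hqx : q x = p x + ε := by simp [hq]
  have hqy : q y = p y - ε := by simp [hq, hne.symm]
  have hqz : ∀ z, z ≠ x → z ≠ y → q z = p z := by
    intro z h1 h2; simp [hq, h1, h2]
  have hq0 : ∀ z, 0 ≤ q z := by
    intro z
    by_cases h1 : z = x
    · rw [h1, hqx]; linarith [hp x]
    by_cases h2 : z = y
    · rw [h2, hqy]; linarith [hp x]
    · rw [hqz z h1 h2]; exact hp z
  -- sum over the pair {x, y} of differences
  have hpair : ∀ F : X → ℝ, (∀ z, z ≠ x → z ≠ y → F z = 0) →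
      ∑ z, F z = F x + F y := by
    intro F hF
    rw [← Finset.sum_pair hne]
    exact (Finset.sum_subset (Finset.subset_univ _) (by
      intro z _ hz
      simp only [Finset.mem_insert, Finset.mem_singleton] at hz
      push_neg at hz
      exact hF z hz.1 hz.2)).symm
  have hsq : ∑ z, q z = 1 := by
    have h1 : ∑ z, (q z - p z) = (q x - p x) + (q y - p y) :=
      hpair _ (fun z h1 h2 => by rw [hqz z h1 h2]; ring)
    have h2 : ∑ z, (q z - p z) = ∑ z, q z - ∑ z, p z := Finset.sum_sub_distrib _ _
    rw [h2, hqx, hqy, hsum] at h1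
    linarith
  refine ⟨hq0, hsq, ?_⟩
  -- entropy comparison
  set f : ℝ → ℝ := fun t =>
    t * ((1 / 2) * Real.logb 2 (4 * t ^ t / (t + 1) ^ (t + 1))) with hf
  have hEnt : ∀ r : X → ℝ, (∀ z, 0 ≤ r z) → linEntropy r = ∑ z, linG (r z) := by
    intro r hr
    unfold linEntropy
    exact Finset.sum_congr rfl (fun z _ => linG_eq (r z) (hr z))
  rw [gt_iff_lt, hEnt p hp, hEnt q hq0]
  have hdiff : ∑ z, (linG (q z) - linG (p z))
      = (linG (q x) - linG (p x)) + (linG (q y) - linG (p y)) :=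
    hpair _ (fun z h1 h2 => by rw [hqz z h1 h2]; ring)
  have hsub : ∑ z, (linG (q z) - linG (p z))
      = ∑ z, linG (q z) - ∑ z, linG (p z) := Finset.sum_sub_distrib _ _
  -- key concavity inequality
  set a := p x
  set b := p y
  have hab : a < b := hxy
  have hba : 0 < b - a := by linarith
  set s : ℝ := ε / (b - a) with hs
  have hs0 : 0 < s := div_pos hε hba
  have hs1 : s < 1 := by
    rw [div_lt_one hba]; linarith
  have hsba : s * (b - a) = ε := div_mul_cancel₀ ε hba.ne'
  have ha0 : a ∈ Ici (0:ℝ) := hp x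
  have hb0 : b ∈ Ici (0:ℝ) := le_trans (hp x) hab.le
  have k1 := strictConcaveOn_linG.2 ha0 hb0 hab.ne (by linarith : 0 < 1 - s) hs0
    (by ring)
  have k2 := strictConcaveOn_linG.2 ha0 hb0 hab.ne hs0 (by linarith : 0 < 1 - s)
    (by ring)
  simp only [smul_eq_mul] at k1 k2
  have e1 : (1 - s) * a + s * b = a + ε := by
    have : (1 - s) * a + s * b = a + s * (b - a) := by ring
    rw [this, hsba]
  have e2 : s * a + (1 - s) * b = b - ε := by
    have : s * a + (1 - s) * b = b - s * (b - a) := by ring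
    rw [this, hsba]
  rw [e1] at k1
  rw [e2] at k2
  have hkey : linG a + linG b < linG (a + ε) + linG (b - ε) := by linarith
  rw [hqx, hqy] at hdiff
  have : 0 < ∑ z, (linG (q z) - linG (p z)) := by rw [hdiff]; linarith
  rw [hsub] at this
  linarith
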